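/- Let S be a semigroup without a zero element (there is no z ∈ S with za = z and az = z for all a ∈ S). Then the relation ~o is equal to the identity relation on S (a ~o b implies a = b, and each a ~o a) if and only if S is commutative and cancellative (both left and right cancellative). -/

import Mathlib

/-!
In a semigroup without zero, `~o` equals the identity relation iff the
semigroup is commutative and cancellative.
-/

namespace ConjPaper

/-- `a ~o b` iff `ag = gb` and `bh = ha` for some `g, h ∈ S¹ = WithOne S`. -/
def ConjO {T : Type*} [Semigroup T] (a b : T) : Prop :=
  ∃ g h : WithOne T,
    (a : WithOne T) * g = g * (b : WithOne T) ∧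
    (b : WithOne T) * h = h * (a : WithOne T)

/-- Let `S` be a semigroup without a zero element. Then `~o` is the
identity relation on `S` (i.e. `a ~o b → a = b`, and `a ~o a` for all `a`) if and only
if `S` is commutative and cancellative. -/
theorem conjO_eq_diagonal_iff (S : Type*) [Semigroup S]
    (hnz : ¬∃ z : S, ∀ a : S, z * a = z ∧ a * z = z) :
    ((∀ a b : S, ConjO a b → a = b) ∧ (∀ a : S, ConjO a a)) ↔
      ((∀ a b : S, a * b = b * a) ∧
        (∀ a b c : S, a * b = a * c → b = c) ∧
        (∀ a b c : S, b * a = c * a → b = c)) := by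

  constructor
  · rintro ⟨hid, -⟩
    have comm : ∀ a b : S, a * b = b * a := by
      intro a b
      refine hid _ _ ⟨(a : WithOne S), (b : WithOne S), ?_, ?_⟩
      · rw [← WithOne.coe_mul, ← WithOne.coe_mul, WithOne.coe_inj, mul_assoc]
      · rw [← WithOne.coe_mul, ← WithOne.coe_mul, WithOne.coe_inj, mul_assoc]
    have lcancel : ∀ a b c : S, a * b = a * c → b = c := by
      intro a b c h
      refine hid _ _ ⟨(a : WithOne S), (a : WithOne S), ?_, ?_⟩
      · rw [← WithOne.coe_mul, ← WithOne.coe_mul, WithOne.coe_inj]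
        rw [comm b a, h]
      · rw [← WithOne.coe_mul, ← WithOne.coe_mul, WithOne.coe_inj]
        rw [comm c a, ← h]
    exact ⟨comm, lcancel, fun a b c h => lcancel a b c (by rw [comm a b, comm a c, h])⟩
  · rintro ⟨comm, lcancel, rcancel⟩
    constructor
    · rintro a b ⟨g, h, hg, -⟩
      induction g using WithOne.recOneCoe with
      | one => simpa [WithOne.coe_inj] using hg
      | coe x =>
        rw [← WithOne.coe_mul, ← WithOne.coe_mul, WithOne.coe_inj] at hg
        exact lcancel x a b (by rw [← comm a x, hg])
    · intro a
      exact ⟨1, 1, by simp, by simp⟩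


end ConjPaper
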